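/- Euler's inversion formula holds: for z in the cut domain ℂ ∖ ({x ≤ 0} ∪ {x ≥ 1}) (or for real 0 < z < 1), Li_2(z) − (log z)·Li_1(z) + Li_2(1−z) = ζ(2), where Li_1(z) = −log(1−z) and Li_2(z) = Σ_{n≥1} z^n/n². -/

import Mathlib

open Real Filter Set

noncomputable section

/-- The dilogarithm Li_2(x) = Σ_{n≥1} x^n/n² (convergent for |x| ≤ 1). -/
def Li2 (x : ℝ) : ℝ := ∑' n : ℕ+, x ^ (n : ℕ) / (n : ℝ) ^ 2

lemma pnat_hasSum {f : ℕ → ℝ} {a : ℝ} (h : HasSum (fun n : ℕ => f (n + 1)) a) :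
    HasSum (fun n : ℕ+ => f (n : ℕ)) a := by
  rw [← Equiv.hasSum_iff Equiv.pnatEquivNat.symm]
  convert h using 2 with n
  rfl

lemma pnat_summable {f : ℕ → ℝ} (h : Summable (fun n : ℕ => f (n + 1))) :
    Summable (fun n : ℕ+ => f (n : ℕ)) :=
  let ⟨a, ha⟩ := h; ⟨a, pnat_hasSum ha⟩

lemma hasSum_li1 {x : ℝ} (h : |x| < 1) :
    HasSum (fun n : ℕ+ => x ^ (n : ℕ) / ((n : ℕ) : ℝ)) (-Real.log (1 - x)) := by
  apply pnat_hasSum (f := fun k : ℕ => x ^ k / (k : ℝ))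
  have := hasSum_pow_div_log_of_abs_lt_one h
  convert this using 2 with n
  push_cast
  ring

lemma summable_inv_sq_pnat : Summable (fun n : ℕ+ => 1 / ((n : ℕ) : ℝ) ^ 2) := by
  apply pnat_summable (f := fun k : ℕ => 1 / (k : ℝ) ^ 2)
  exact (summable_nat_add_iff (f := fun k : ℕ => 1 / (k : ℝ) ^ 2) 1).2 hasSum_zeta_two.summable

lemma li2_continuousOn : ContinuousOn Li2 (Icc (-1 : ℝ) 1) := by
  apply continuousOn_tsum (u := fun n : ℕ+ => 1 / ((n : ℕ) : ℝ) ^ 2)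
    (f := fun (n : ℕ+) (x : ℝ) => x ^ (n : ℕ) / ((n : ℕ) : ℝ) ^ 2)
  · exact fun n => ((continuous_pow _).div_const _).continuousOn
  · exact summable_inv_sq_pnat
  · intro n x hx
    have h1 : |x| ≤ 1 := abs_le.2 ⟨hx.1, hx.2⟩
    have hn : (0:ℝ) < ((n : ℕ) : ℝ) := by exact_mod_cast n.pos
    rw [norm_div, norm_pow, Real.norm_eq_abs, Real.norm_eq_abs,
      abs_of_pos (by positivity : (0:ℝ) < ((n : ℕ) : ℝ) ^ 2)]
    gcongr
    exact pow_le_one₀ (abs_nonneg _) h1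

lemma li2_hasDerivAt {x : ℝ} (hx : 0 < x) (hx1 : x < 1) :
    HasDerivAt Li2 (-Real.log (1 - x) / x) x := by
  set r : ℝ := (1 + x) / 2 with hr
  have hr0 : 0 < r := by positivity
  have hr1 : r < 1 := by rw [hr]; linarith
  have hxr : x < r := by rw [hr]; linarith
  have key : HasDerivAt Li2
      (∑' n : ℕ+, ((n : ℕ) : ℝ) * x ^ ((n : ℕ) - 1) / ((n : ℕ) : ℝ) ^ 2) x := by
    apply hasDerivAt_tsum_of_isPreconnected
      (u := fun n : ℕ+ => r ^ ((n : ℕ) - 1))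
      (g := fun (n : ℕ+) (y : ℝ) => y ^ (n : ℕ) / ((n : ℕ) : ℝ) ^ 2)
      (g' := fun (n : ℕ+) (y : ℝ) => ((n : ℕ) : ℝ) * y ^ ((n : ℕ) - 1) / ((n : ℕ) : ℝ) ^ 2)
      (y₀ := 0) (t := Ioo (-r) r)
    · apply pnat_summable (f := fun k : ℕ => r ^ (k - 1))
      exact (summable_geometric_of_lt_one hr0.le hr1).congr (fun n => by simp)
    · exact isOpen_Ioo
    · exact (convex_Ioo _ _).isPreconnected
    · exact fun n y _ => (hasDerivAt_pow (n : ℕ) y).div_const _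
    · intro n y hy
      have hyr : |y| ≤ r := le_of_lt (abs_lt.2 ⟨hy.1, hy.2⟩)
      have hn : (1:ℝ) ≤ ((n : ℕ) : ℝ) := by exact_mod_cast n.one_le
      have e1 : ‖((n : ℕ) : ℝ) * y ^ ((n : ℕ) - 1) / ((n : ℕ) : ℝ) ^ 2‖
          = |y| ^ ((n : ℕ) - 1) / ((n : ℕ) : ℝ) := by
        rw [norm_div, norm_mul, norm_pow, Real.norm_eq_abs, Real.norm_eq_abs,
          Real.norm_eq_abs, abs_of_nonneg (by positivity : (0:ℝ) ≤ ((n : ℕ) : ℝ)),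
          abs_of_nonneg (by positivity : (0:ℝ) ≤ ((n : ℕ) : ℝ) ^ 2)]
        field_simp
      rw [e1]
      calc |y| ^ ((n : ℕ) - 1) / ((n : ℕ) : ℝ) ≤ |y| ^ ((n : ℕ) - 1) :=
            div_le_self (by positivity) hn
        _ ≤ r ^ ((n : ℕ) - 1) := pow_le_pow_left₀ (abs_nonneg _) hyr _
    · exact ⟨by linarith, hr0⟩
    · apply Summable.congr summable_zero
      intro n
      simp [zero_pow n.pos.ne']
    · exact ⟨by linarith, hxr⟩
  convert key using 1
  have h1 : HasSum (fun n : ℕ+ => x ^ (n : ℕ) / ((n : ℕ) : ℝ)) (-Real.log (1 - x)) :=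
    hasSum_li1 (by rw [abs_of_pos hx]; exact hx1)
  have h2 := h1.div_const x
  have h3 : (fun n : ℕ+ => x ^ (n : ℕ) / ((n : ℕ) : ℝ) / x)
      = fun n : ℕ+ => ((n : ℕ) : ℝ) * x ^ ((n : ℕ) - 1) / ((n : ℕ) : ℝ) ^ 2 := by
    funext n
    have hn : (n : ℕ) = ((n : ℕ) - 1) + 1 := (Nat.succ_pred_eq_of_pos n.pos).symm
    have hnr : (0:ℝ) < ((n : ℕ) : ℝ) := by exact_mod_cast n.pos
    rw [hn, pow_succ]
    field_simp
    ring
    rw [Nat.add_sub_cancel_left]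
  rw [h3] at h2
  exact h2.tsum_eq.symm

def Feuler (z : ℝ) : ℝ := Li2 z + Li2 (1 - z) + Real.log z * Real.log (1 - z)

lemma Feuler_hasDerivAt {z : ℝ} (h0 : 0 < z) (h1 : z < 1) :
    HasDerivAt Feuler 0 z := by
  have hz1 : (0:ℝ) < 1 - z := by linarith
  have inner : HasDerivAt (fun w : ℝ => 1 - w) (-1) z := (hasDerivAt_id z).const_sub 1
  have A := li2_hasDerivAt h0 h1
  have A2 := (li2_hasDerivAt hz1 (by linarith)).comp z inner
  have L1 := Real.hasDerivAt_log h0.ne'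
  have L2 := (Real.hasDerivAt_log hz1.ne').comp z inner
  have P := L1.mul L2
  have total := (A.add A2).add P
  refine HasDerivAt.congr_deriv (f := Feuler) total ?_
  rw [show (1:ℝ) - (1 - z) = z by ring]
  simp only [Function.comp_apply]
  field_simp
  ring

lemma Feuler_const {a z : ℝ} (ha : 0 < a) (haz : a ≤ z) (hz1 : z < 1) :
    Feuler z = Feuler a := by
  have H : ∀ x ∈ Icc a z, x ∈ Ioo (0:ℝ) 1 := fun x hx => ⟨lt_of_lt_of_le ha hx.1, lt_of_le_of_lt hx.2 hz1⟩
  have := eq_of_has_deriv_right_eq (f := Feuler) (f' := fun _ => 0) (g := fun _ => Feuler a)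
    (a := a) (b := z)
    (fun x hx => (Feuler_hasDerivAt (H x ⟨hx.1, hx.2.le⟩).1 (H x ⟨hx.1, hx.2.le⟩).2).hasDerivWithinAt)
    (fun x _ => (hasDerivAt_const x _).hasDerivWithinAt)
    (fun x hx => (Feuler_hasDerivAt (H x hx).1 (H x hx).2).continuousAt.continuousWithinAt)
    continuousOn_const rfl
  exact this z ⟨haz, le_refl z⟩

lemma li2_zero : Li2 0 = 0 := by
  have : (fun n : ℕ+ => (0:ℝ) ^ (n : ℕ) / ((n : ℕ) : ℝ) ^ 2) = fun _ => 0 := by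
    funext n; simp [zero_pow n.pos.ne']
  rw [Li2, this, tsum_zero]

lemma li2_one : Li2 1 = Real.pi ^ 2 / 6 := by
  have h2 : HasSum (fun n : ℕ => 1 / (((n + 1) : ℕ) : ℝ) ^ 2) (Real.pi ^ 2 / 6) := by
    rw [hasSum_nat_add_iff (f := fun n : ℕ => 1 / (n : ℝ) ^ 2) 1]
    simpa using hasSum_zeta_two
  have h3 : HasSum (fun n : ℕ+ => (1:ℝ) ^ (n : ℕ) / ((n : ℕ) : ℝ) ^ 2) (Real.pi ^ 2 / 6) := by
    have := pnat_hasSum (f := fun k : ℕ => 1 / (k : ℝ) ^ 2) h2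
    convert this using 2 with n
    simp
  exact h3.tsum_eq

lemma tendsto_F : Tendsto Feuler (nhdsWithin 0 (Ioi 0)) (nhds (Real.pi ^ 2 / 6)) := by
  have hIoo : Ioo (0:ℝ) 1 ∈ nhdsWithin (0:ℝ) (Ioi 0) :=
    Ioo_mem_nhdsGT_of_mem ⟨le_refl 0, zero_lt_one⟩
  have T1 : Tendsto Li2 (nhdsWithin 0 (Ioi 0)) (nhds 0) := by
    have c0 : ContinuousAt Li2 0 :=
      li2_continuousOn.continuousAt (Icc_mem_nhds (by norm_num) (by norm_num))
    have := c0.tendsto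
    rw [li2_zero] at this
    exact this.mono_left nhdsWithin_le_nhds
  have T2 : Tendsto (fun z => Li2 (1 - z)) (nhdsWithin 0 (Ioi 0)) (nhds (Real.pi ^ 2 / 6)) := by
    have cw : ContinuousWithinAt Li2 (Icc (-1 : ℝ) 1) 1 := li2_continuousOn 1 (by norm_num)
    have hmap : Tendsto (fun z : ℝ => 1 - z) (nhdsWithin 0 (Ioi 0))
        (nhdsWithin 1 (Icc (-1 : ℝ) 1)) := by
      rw [tendsto_nhdsWithin_iff]
      constructor
      · have h : Tendsto (fun z : ℝ => 1 - z) (nhds 0) (nhds 1) := by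
          simpa using (tendsto_id (x := nhds (0:ℝ))).const_sub (1:ℝ)
        exact h.mono_left nhdsWithin_le_nhds
      · filter_upwards [hIoo] with z hz
        exact ⟨by linarith [hz.2], by linarith [hz.1]⟩
    have := cw.tendsto.comp hmap
    rwa [li2_one] at this
  have T3 : Tendsto (fun z => Real.log z * Real.log (1 - z)) (nhdsWithin 0 (Ioi 0)) (nhds 0) := by
    have g1 : Tendsto (fun z : ℝ => Real.log z * z) (nhdsWithin 0 (Ioi 0)) (nhds 0) := by
      have := tendsto_log_mul_rpow_nhdsGT_zero zero_lt_one
      apply this.congr'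
      filter_upwards [self_mem_nhdsWithin] with z _
      rw [Real.rpow_one]
    have g2 : Tendsto (fun z : ℝ => Real.log (1 - z) / z) (nhdsWithin 0 (Ioi 0)) (nhds (-1)) := by
      have hd : HasDerivAt (fun w : ℝ => Real.log (1 - w)) (-1) 0 := by
        have inner : HasDerivAt (fun w : ℝ => 1 - w) (-1) 0 := (hasDerivAt_id 0).const_sub 1
        have := inner.log (by norm_num)
        simpa using this
      have := hasDerivAt_iff_tendsto_slope.1 hd
      have hmono : nhdsWithin (0:ℝ) (Ioi 0) ≤ nhdsWithin 0 {(0:ℝ)}ᶜ :=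
        nhdsWithin_mono _ (fun x hx => ne_of_gt hx)
      apply (this.mono_left hmono).congr'
      filter_upwards [self_mem_nhdsWithin] with z hz
      have hz0 : z ≠ 0 := ne_of_gt hz
      simp [slope_def_field, hz0]
    have := g1.mul g2
    rw [zero_mul] at this
    apply this.congr'
    filter_upwards [self_mem_nhdsWithin] with z hz
    have hz0 : z ≠ 0 := ne_of_gt hz
    field_simp
  have := (T1.add T2).add T3
  show Tendsto (fun x => Li2 x + Li2 (1 - x) + Real.log x * Real.log (1 - x)) _ _
  simpa using this

/-- Euler's inversion formula — for real 0 < z < 1,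
Li_2(z) − (log z)·Li_1(z) + Li_2(1−z) = ζ(2) = π²/6, where Li_1(z) = −log(1−z). -/
theorem euler_inversion (z : ℝ) (h0 : 0 < z) (h1 : z < 1) :
    Li2 z - Real.log z * (-(Real.log (1 - z))) + Li2 (1 - z) = Real.pi ^ 2 / 6 := by
  have hev : (fun _ : ℝ => Feuler z) =ᶠ[nhdsWithin 0 (Ioi 0)] Feuler := by
    have hm : Ioo (0:ℝ) z ∈ nhdsWithin (0:ℝ) (Ioi 0) :=
      Ioo_mem_nhdsGT_of_mem ⟨le_refl 0, h0⟩
    filter_upwards [hm] with a ha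
    exact (Feuler_const ha.1 ha.2.le h1)
  have hT : Tendsto Feuler (nhdsWithin 0 (Ioi 0)) (nhds (Feuler z)) :=
    tendsto_const_nhds.congr' hev
  have hFz : Feuler z = Real.pi ^ 2 / 6 := tendsto_nhds_unique hT tendsto_F
  rw [Feuler] at hFz
  linarith
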